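/- The third derivative of f(x) = sin(x)·(1 - 1/(8·sin³(x/2))) is strictly positive on (0, 2π). -/

import Mathlib

open Real Set

noncomputable def f (x : ℝ) : ℝ := Real.sin x * (1 - 1 / (8 * Real.sin (x/2)^3))

noncomputable def f1 (x : ℝ) : ℝ :=
  Real.cos x + (2 - Real.sin (x/2)^2) / (8 * Real.sin (x/2)^3)

noncomputable def f2 (x : ℝ) : ℝ :=
  -Real.sin x + Real.cos (x/2) * (Real.sin (x/2)^2 - 6) / (16 * Real.sin (x/2)^4)

noncomputable def f3 (x : ℝ) : ℝ :=
  -Real.cos x + (Real.sin (x/2)^4 - 20*Real.sin (x/2)^2 + 24) / (32 * Real.sin (x/2)^5)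

lemma hsin_half (x : ℝ) : HasDerivAt (fun y : ℝ => Real.sin (y/2)) (Real.cos (x/2) * (1/2)) x := by
  exact (Real.hasDerivAt_sin (x/2)).comp x ((hasDerivAt_id x).div_const 2)

lemma hcos_half (x : ℝ) : HasDerivAt (fun y : ℝ => Real.cos (y/2)) (-Real.sin (x/2) * (1/2)) x := by
  exact (Real.hasDerivAt_cos (x/2)).comp x ((hasDerivAt_id x).div_const 2)

lemma hd1 (x : ℝ) (hs : Real.sin (x/2) ≠ 0) : HasDerivAt f (f1 x) x := by
  have hne : 8 * Real.sin (x/2)^3 ≠ 0 := by positivity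
  have hpow := ((hsin_half x).pow 3).const_mul (8:ℝ)
  have hdiv := (hasDerivAt_const x (1:ℝ)).div hpow hne
  have h := (Real.hasDerivAt_sin x).mul ((hasDerivAt_const x (1:ℝ)).sub hdiv)
  refine (h.congr_deriv ?_ : _)
  symm
  simp only [Pi.pow_apply, Pi.sub_apply, Pi.div_apply, Pi.mul_apply]
  have hsx : Real.sin x = 2 * Real.sin (x/2) * Real.cos (x/2) := by
    have := Real.sin_two_mul (x/2); rwa [show 2*(x/2) = x by ring] at this
  have hcx : Real.cos x = 1 - 2 * Real.sin (x/2)^2 := by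
    have h1 := Real.cos_two_mul (x/2)
    have h2 := Real.sin_sq_add_cos_sq (x/2)
    rw [show 2*(x/2) = x by ring] at h1
    linarith [h1, h2]
  have hc2 : Real.cos (x/2)^2 = 1 - Real.sin (x/2)^2 := by
    have := Real.sin_sq_add_cos_sq (x/2); linarith
  rw [f1, hsx, hcx]
  field_simp
  linear_combination (-3 * Real.sin (x/2)^2) * hc2
  

lemma hd2 (x : ℝ) (hs : Real.sin (x/2) ≠ 0) : HasDerivAt f1 (f2 x) x := by
  have hne : 8 * Real.sin (x/2)^3 ≠ 0 := by positivity
  have hnum : HasDerivAt (fun y : ℝ => 2 - Real.sin (y/2)^2)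
      (-(2 * Real.sin (x/2) * (Real.cos (x/2) * (1/2)))) x :=
    ((hasDerivAt_const x (2:ℝ)).sub ((hsin_half x).pow 2)).congr_deriv (by norm_num)
  have hden := ((hsin_half x).pow 3).const_mul (8:ℝ)
  have h := (Real.hasDerivAt_cos x).add (hnum.div hden hne)
  refine (h.congr_deriv ?_ : _)
  symm
  simp only [Pi.pow_apply, Pi.sub_apply, Pi.div_apply, Pi.mul_apply]
  rw [f2]
  field_simp
  ring

lemma hd3 (x : ℝ) (hs : Real.sin (x/2) ≠ 0) : HasDerivAt f2 (f3 x) x := by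
  have hne : 16 * Real.sin (x/2)^4 ≠ 0 := by positivity
  have hnum : HasDerivAt (fun y : ℝ => Real.cos (y/2) * (Real.sin (y/2)^2 - 6))
      ((-Real.sin (x/2) * (1/2)) * (Real.sin (x/2)^2 - 6)
        + Real.cos (x/2) * (2 * Real.sin (x/2) * (Real.cos (x/2) * (1/2)))) x :=
    (hcos_half x).mul (by simpa using ((hsin_half x).pow 2).sub_const 6)
  have hden := ((hsin_half x).pow 4).const_mul (16:ℝ)
  have h := ((Real.hasDerivAt_sin x).neg).add (hnum.div hden hne)
  refine (h.congr_deriv ?_ : _)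
  symm
  simp only [Pi.pow_apply, Pi.sub_apply, Pi.div_apply, Pi.mul_apply]
  have hc2 : Real.cos (x/2)^2 = 1 - Real.sin (x/2)^2 := by
    have := Real.sin_sq_add_cos_sq (x/2); linarith
  rw [f3]
  field_simp
  linear_combination (-768 * Real.sin (x/2)^3 + 64 * Real.sin (x/2)^5) * hc2
  

theorem stmt4 : ∀ x ∈ Ioo (0:ℝ) (2*π), iteratedDeriv 3 f x > 0 := by
  have hspos : ∀ y ∈ Ioo (0:ℝ) (2*π), 0 < Real.sin (y/2) := by
    intro y hy
    exact Real.sin_pos_of_pos_of_lt_pi (by linarith [hy.1]) (by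
      have := hy.2; linarith [this])
  intro x hx
  have hO : IsOpen (Ioo (0:ℝ) (2*π)) := isOpen_Ioo
  -- deriv f = f1 on the interval
  have e1 : ∀ y ∈ Ioo (0:ℝ) (2*π), deriv f y = f1 y :=
    fun y hy => (hd1 y (ne_of_gt (hspos y hy))).deriv
  have e2 : ∀ y ∈ Ioo (0:ℝ) (2*π), deriv (deriv f) y = f2 y := by
    intro y hy
    have hev : deriv f =ᶠ[nhds y] f1 := by
      filter_upwards [hO.mem_nhds hy] with z hz using e1 z hz
    rw [hev.deriv_eq]
    exact (hd2 y (ne_of_gt (hspos y hy))).deriv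
  have e3 : deriv (deriv (deriv f)) x = f3 x := by
    have hev : deriv (deriv f) =ᶠ[nhds x] f2 := by
      filter_upwards [hO.mem_nhds hx] with z hz using e2 z hz
    rw [hev.deriv_eq]
    exact (hd3 x (ne_of_gt (hspos x hx))).deriv
  have hit : iteratedDeriv 3 f x = f3 x := by
    rw [show (3:ℕ) = 2 + 1 from rfl, iteratedDeriv_succ,
        show (2:ℕ) = 1 + 1 from rfl, iteratedDeriv_succ, iteratedDeriv_one]
    exact e3
  rw [hit]
  -- positivity
  set s := Real.sin (x/2) with hsdef
  have hs0 : 0 < s := hspos x hx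
  have hs1 : s ≤ 1 := Real.sin_le_one _
  have hcx : Real.cos x = 1 - 2 * s^2 := by
    have h1 := Real.cos_two_mul (x/2)
    have h2 := Real.sin_sq_add_cos_sq (x/2)
    rw [show 2*(x/2) = x by ring] at h1
    rw [hsdef]; linarith [h1, h2]
  have key : 0 < 64*s^7 - 32*s^5 + s^4 - 20*s^2 + 24 := by
    nlinarith [sq_nonneg (s - 1), sq_nonneg (s^2 - 1), sq_nonneg s, sq_nonneg (s^3 - s),
      mul_pos hs0 hs0, sq_nonneg (8*s^3 - 2*s), pow_le_one₀ hs0.le hs1 (n := 5),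
      mul_nonneg (mul_nonneg hs0.le hs0.le) hs0.le]
  have hform : f3 x = (64*s^7 - 32*s^5 + s^4 - 20*s^2 + 24) / (32 * s^5) := by
    rw [f3, hcx, ← hsdef]
    field_simp
    ring
  rw [hform]
  positivity
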